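/- Let V(n) = S(n)1_n be the left ideal of S(n) generated by 1_n, regarded as a left S(n)-module. The elements x_a = F^a 1_n for 0 ≤ a ≤ n form a k-basis of V(n), so dim_k V(n) = n+1. Moreover F x_a = x_{a+1} for a < n, F x_n = 0, E x_a = [n−a+1][a] x_{a−1} for a > 0, E x_0 = 0, and 1_i x_a = δ_{i,n−2a} x_a for all i ∈ X(n) and 0 ≤ a ≤ n. If in addition [n]! ≠ 0 in k, then V(n) is a simple S(n)-module. -/

import Mathlib

noncomputable section

open scoped TensorProduct

/-- Balanced quantum integer `[m]` for a natural number `m`. -/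
def qintN {k : Type*} [Field k] (v : k) (m : ℕ) : k :=
  ∑ t ∈ Finset.range m, v ^ ((m : ℤ) - 1 - 2 * t)

/-- Balanced quantum integer `[m]` for an integer `m`. -/
def qint {k : Type*} [Field k] (v : k) (m : ℤ) : k :=
  if 0 ≤ m then qintN v m.toNat else - qintN v (-m).toNat

/-- Quantum factorial `[m]! = [1][2]⋯[m]`. -/
def qfact {k : Type*} [Field k] (v : k) (m : ℕ) : k :=
  ∏ j ∈ Finset.range m, qintN v (j + 1)

/-- `X(n) = {i ∈ ℤ : |i| ≤ n, i ≡ n (mod 2)}`. -/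
def Xset (n : ℕ) : Finset ℤ :=
  (Finset.Icc (-(n : ℤ)) (n : ℤ)).filter (fun i => i % 2 = (n : ℤ) % 2)

/-- Generators of the quantum Schur algebra: `E`, `F`, and the idempotents
`1_i` (the latter indexed by all integers; those outside `X(n)` are set to
zero by the relations). -/
inductive SchurGen : Type
  | E : SchurGen
  | F : SchurGen
  | unit : ℤ → SchurGen

variable (k : Type*) [Field k]

/-- The defining relations of the quantum Schur algebra `S(n)`. -/
inductive SchurRel (v : k) (n : ℕ) :
    FreeAlgebra k SchurGen → FreeAlgebra k SchurGen → Prop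
  | idem : ∀ i ∈ Xset n, ∀ j ∈ Xset n,
      SchurRel v n
        (FreeAlgebra.ι k (SchurGen.unit i) * FreeAlgebra.ι k (SchurGen.unit j))
        (if i = j then FreeAlgebra.ι k (SchurGen.unit i) else 0)
  | sum_one : SchurRel v n (∑ i ∈ Xset n, FreeAlgebra.ι k (SchurGen.unit i)) 1
  | unit_zero : ∀ i ∉ Xset n, SchurRel v n (FreeAlgebra.ι k (SchurGen.unit i)) 0
  | comm : SchurRel v n
      (FreeAlgebra.ι k SchurGen.E * FreeAlgebra.ι k SchurGen.F -
        FreeAlgebra.ι k SchurGen.F * FreeAlgebra.ι k SchurGen.E)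
      (∑ i ∈ Xset n, qint v i • FreeAlgebra.ι k (SchurGen.unit i))
  | Eu (i : ℤ) : SchurRel v n
      (FreeAlgebra.ι k SchurGen.E * FreeAlgebra.ι k (SchurGen.unit i))
      (FreeAlgebra.ι k (SchurGen.unit (i + 2)) * FreeAlgebra.ι k SchurGen.E)
  | Fu (i : ℤ) : SchurRel v n
      (FreeAlgebra.ι k SchurGen.F * FreeAlgebra.ι k (SchurGen.unit i))
      (FreeAlgebra.ι k (SchurGen.unit (i - 2)) * FreeAlgebra.ι k SchurGen.F)
  | uE (i : ℤ) : SchurRel v n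
      (FreeAlgebra.ι k (SchurGen.unit i) * FreeAlgebra.ι k SchurGen.E)
      (FreeAlgebra.ι k SchurGen.E * FreeAlgebra.ι k (SchurGen.unit (i - 2)))
  | uF (i : ℤ) : SchurRel v n
      (FreeAlgebra.ι k (SchurGen.unit i) * FreeAlgebra.ι k SchurGen.F)
      (FreeAlgebra.ι k SchurGen.F * FreeAlgebra.ι k (SchurGen.unit (i + 2)))

/-- The quantum Schur algebra `S(n)`, presented by generators and relations. -/
abbrev SchurAlg (v : k) (n : ℕ) := RingQuot (SchurRel k v n)

/-- The generator `E` of `S(n)`. -/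
def SE (v : k) (n : ℕ) : SchurAlg k v n :=
  RingQuot.mkAlgHom k (SchurRel k v n) (FreeAlgebra.ι k SchurGen.E)

/-- The generator `F` of `S(n)`. -/
def SF (v : k) (n : ℕ) : SchurAlg k v n :=
  RingQuot.mkAlgHom k (SchurRel k v n) (FreeAlgebra.ι k SchurGen.F)

/-- The generator `1_i` of `S(n)`. -/
def Sunit (v : k) (n : ℕ) (i : ℤ) : SchurAlg k v n :=
  RingQuot.mkAlgHom k (SchurRel k v n) (FreeAlgebra.ι k (SchurGen.unit i))

section PartA
variable {k : Type*} [Field k] (v : k) (hv : v ≠ 0)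

lemma qint_natCast (m : ℕ) : qint v (m : ℤ) = qintN v m := by
  simp [qint]

lemma qint_zero : qint v 0 = 0 := by simp [qint, qintN]

lemma qint_neg (m : ℤ) : qint v (-m) = - qint v m := by
  rcases lt_trichotomy m 0 with h | h | h
  · simp only [qint, if_pos (by omega : (0:ℤ) ≤ -m), if_neg (by omega : ¬ (0:ℤ) ≤ m)]
    ring
  · simp [h, qint_zero]
  · simp only [qint, if_neg (by omega : ¬ (0:ℤ) ≤ -m), if_pos (by omega : (0:ℤ) ≤ m), neg_neg]

include hv

lemma key_sub (x a : ℕ) (hax : a ≤ x) :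
    v ^ (a : ℤ) * qintN v x - v ^ (x : ℤ) * qintN v a = qintN v (x - a) := by
  obtain ⟨d, rfl⟩ := Nat.exists_eq_add_of_le hax
  have e1 : v ^ (a : ℤ) * qintN v (a + d) = ∑ t ∈ Finset.range (a + d),
      v ^ ((a : ℤ) + a + d - 1 - 2 * t) := by
    rw [qintN, Finset.mul_sum]
    refine Finset.sum_congr rfl fun t _ => ?_
    rw [← zpow_add₀ hv]
    congr 1
    push_cast; ring
  have e2 : v ^ ((a + d : ℕ) : ℤ) * qintN v a = ∑ t ∈ Finset.range a,
      v ^ ((a : ℤ) + a + d - 1 - 2 * t) := by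
    rw [qintN, Finset.mul_sum]
    refine Finset.sum_congr rfl fun t _ => ?_
    rw [← zpow_add₀ hv]
    congr 1
    push_cast; ring
  rw [e1, e2, Finset.sum_range_add, add_sub_cancel_left]
  simp only [Nat.add_sub_cancel_left]
  rw [qintN]
  refine Finset.sum_congr rfl fun t _ => ?_
  congr 1
  push_cast; ring

lemma key (x a : ℕ) :
    v ^ (a : ℤ) * qintN v x - v ^ (x : ℤ) * qintN v a = qint v ((x : ℤ) - a) := by
  rcases le_total a x with h | h
  · rw [key_sub v hv x a h]
    rw [show (x : ℤ) - a = ((x - a : ℕ) : ℤ) by omega, qint_natCast]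
  · have := key_sub v hv a x h
    rw [show (x : ℤ) - a = -((a : ℤ) - x) by ring, qint_neg,
      show (a : ℤ) - x = ((a - x : ℕ) : ℤ) by omega, qint_natCast, ← this]
    ring

lemma qintN_succ (m : ℕ) : qintN v (m + 1) = v ^ (m : ℤ) + v⁻¹ * qintN v m := by
  have h1 : v⁻¹ * qintN v m = ∑ t ∈ Finset.range m,
      v ^ (((m + 1 : ℕ) : ℤ) - 1 - 2 * ((t : ℕ) + 1 : ℕ)) := by
    rw [qintN, Finset.mul_sum]
    refine Finset.sum_congr rfl fun t _ => ?_
    rw [← zpow_neg_one, ← zpow_add₀ hv]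
    congr 1; push_cast; ring
  have h0 : v ^ (((m + 1 : ℕ) : ℤ) - 1 - 2 * ((0 : ℕ) : ℤ)) = v ^ (m : ℤ) := by
    congr 1; push_cast; ring
  rw [qintN, Finset.sum_range_succ', h0, h1, add_comm]

/-- The main identity: `[x][a+1] - [x+1][a] = [x-a]`. -/
lemma main_id (x a : ℕ) :
    qintN v x * qintN v (a + 1) - qintN v (x + 1) * qintN v a = qint v ((x : ℤ) - a) := by
  rw [qintN_succ v hv a, qintN_succ v hv x, ← key v hv x a]
  ring

end PartA

set_option linter.unusedSectionVars false
set_option maxHeartbeats 1000000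

section PartB
variable (v : k) (hv : v ≠ 0) (n : ℕ)

lemma mem_Xset_iff (i : ℤ) : i ∈ Xset n ↔ (-(n:ℤ) ≤ i ∧ i ≤ n ∧ i % 2 = (n:ℤ) % 2) := by
  simp [Xset, Finset.mem_filter, Finset.mem_Icc, and_assoc]

lemma sub_two_mem_Xset (a : ℕ) (ha : a ≤ n) : (n : ℤ) - 2 * a ∈ Xset n := by
  rw [mem_Xset_iff]
  omega

lemma Sunit_zero {i : ℤ} (hi : i ∉ Xset n) : Sunit k v n i = 0 := by
  have := RingQuot.mkAlgHom_rel k (SchurRel.unit_zero (v := v) i hi)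
  simpa [Sunit] using this

lemma Sunit_mul (i j : ℤ) :
    Sunit k v n i * Sunit k v n j = if i = j then Sunit k v n i else 0 := by
  by_cases hi : i ∈ Xset n
  · by_cases hj : j ∈ Xset n
    · have := RingQuot.mkAlgHom_rel k (SchurRel.idem (v := v) i hi j hj)
      rw [map_mul] at this
      rw [Sunit, Sunit, this]
      split_ifs <;> simp [Sunit]
    · rw [Sunit_zero k v n hj, mul_zero]
      split_ifs with h
      · subst h; exact (Sunit_zero k v n hj).symm
      · rfl
  · rw [Sunit_zero k v n hi, zero_mul]
    split_ifs <;> rfl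

lemma Sunit_idem : Sunit k v n (n : ℤ) * Sunit k v n (n : ℤ) = Sunit k v n (n : ℤ) := by
  rw [Sunit_mul, if_pos rfl]

lemma SF_Sunit (i : ℤ) :
    SF k v n * Sunit k v n i = Sunit k v n (i - 2) * SF k v n := by
  have := RingQuot.mkAlgHom_rel k (SchurRel.Fu (v := v) (n := n) i)
  simpa [SF, Sunit, map_mul] using this

lemma SE_Sunit (i : ℤ) :
    SE k v n * Sunit k v n i = Sunit k v n (i + 2) * SE k v n := by
  have := RingQuot.mkAlgHom_rel k (SchurRel.Eu (v := v) (n := n) i)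
  simpa [SE, Sunit, map_mul] using this

lemma comm_S :
    SE k v n * SF k v n = SF k v n * SE k v n
      + ∑ i ∈ Xset n, qint v i • Sunit k v n i := by
  have h := RingQuot.mkAlgHom_rel k (SchurRel.comm (v := v) (n := n))
  rw [map_sub, map_mul, map_mul, map_sum] at h
  simp only [map_smul] at h
  rw [← sub_eq_iff_eq_add']
  exact h

lemma SFpow_Sunit (a : ℕ) (i : ℤ) :
    SF k v n ^ a * Sunit k v n i = Sunit k v n (i - 2 * a) * SF k v n ^ a := by
  induction a with
  | zero => simp
  | succ a ih =>
    rw [pow_succ', mul_assoc, ih, ← mul_assoc, SF_Sunit, mul_assoc, ← pow_succ']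
    congr 2
    push_cast; ring

/-- `x_a = F^a 1_n`. -/
def xv (a : ℕ) : SchurAlg k v n := SF k v n ^ a * Sunit k v n (n : ℤ)

lemma xv_eq (a : ℕ) : xv k v n a = Sunit k v n ((n : ℤ) - 2 * a) * xv k v n a := by
  conv_lhs => rw [xv, ← Sunit_idem k v n, ← mul_assoc, SFpow_Sunit]
  rw [mul_assoc, xv]

lemma Sunit_xv (i : ℤ) (a : ℕ) :
    Sunit k v n i * xv k v n a = if i = (n : ℤ) - 2 * a then xv k v n a else 0 := by
  conv_lhs => rw [xv_eq, ← mul_assoc, Sunit_mul]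
  split_ifs with h
  · rw [h]
    exact (xv_eq k v n a).symm
  · rw [zero_mul]

lemma SF_xv (a : ℕ) : SF k v n * xv k v n a = xv k v n (a + 1) := by
  rw [xv, xv, pow_succ', mul_assoc]

lemma xv_succ_n : xv k v n (n + 1) = 0 := by
  rw [xv_eq]
  have : ((n : ℤ) - 2 * ((n : ℕ) + 1 : ℕ)) ∉ Xset n := by
    rw [mem_Xset_iff]; push_cast; omega
  rw [Sunit_zero k v n this, zero_mul]

lemma sum_smul_Sunit_xv (a : ℕ) (ha : a ≤ n) :
    ∑ i ∈ Xset n, qint v i • (Sunit k v n i * xv k v n a)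
      = qint v ((n : ℤ) - 2 * a) • xv k v n a := by
  rw [Finset.sum_eq_single ((n : ℤ) - 2 * a)]
  · rw [Sunit_xv, if_pos rfl]
  · intro i hi hne
    rw [Sunit_xv, if_neg hne, smul_zero]
  · intro h
    exact absurd (sub_two_mem_Xset n a ha) h

include hv in
lemma Cstep (a : ℕ) (ha : a ≤ n) :
    qint v ((n : ℤ) - a + 1) * qint v (a : ℤ) + qint v ((n : ℤ) - 2 * a)
      = qint v ((n : ℤ) - ((a : ℕ) + 1 : ℕ) + 1) * qint v ((a + 1 : ℕ) : ℤ) := by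
  have hm := main_id v hv (n - a) a
  have h3 : ((n - a : ℕ) : ℤ) - a = (n : ℤ) - 2 * a := by omega
  rw [h3] at hm
  rw [show (n : ℤ) - ((a : ℕ) + 1 : ℕ) + 1 = ((n - a : ℕ) : ℤ) by omega,
    show ((a + 1 : ℕ) : ℤ) = ((a : ℕ) : ℤ) + 1 by push_cast; ring,
    qint_natCast]
  rw [show (n : ℤ) - a + 1 = ((n - a + 1 : ℕ) : ℤ) by omega, qint_natCast,
    qint_natCast, show ((a : ℕ) : ℤ) + 1 = ((a + 1 : ℕ) : ℤ) by push_cast; ring,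
    qint_natCast]
  linear_combination -hm

include hv in
lemma SE_xv (a : ℕ) (ha : a ≤ n) :
    SE k v n * xv k v n a
      = (qint v ((n : ℤ) - a + 1) * qint v (a : ℤ)) • xv k v n (a - 1) := by
  induction a with
  | zero =>
    have h : ((n : ℤ) + 2) ∉ Xset n := by rw [mem_Xset_iff]; omega
    rw [xv]
    simp only [pow_zero, one_mul]
    rw [SE_Sunit, Sunit_zero k v n h, zero_mul]
    simp [qint_zero]
  | succ a ih =>
    have ha' : a ≤ n := Nat.le_of_succ_le ha
    rw [← SF_xv, ← mul_assoc, comm_S, add_mul, mul_assoc, ih ha',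
      Finset.sum_mul]
    have hsum : ∀ i ∈ Xset n, (qint v i • Sunit k v n i) * xv k v n a
        = qint v i • (Sunit k v n i * xv k v n a) := fun i _ => smul_mul_assoc _ _ _
    rw [Finset.sum_congr rfl hsum, sum_smul_Sunit_xv k v n a ha', mul_smul_comm,
      Nat.add_sub_cancel]
    rcases Nat.eq_zero_or_pos a with rfl | hpos
    · rw [← Cstep k v hv n 0 (Nat.zero_le n)]
      simp [qint_zero]
    · rw [SF_xv, Nat.sub_add_cancel hpos, ← add_smul, Cstep k v hv n a ha']
end PartB

section PartC
variable (v : k) (hv : v ≠ 0) (n : ℕ)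

/-- Coefficient `[n-a+1][a]`. -/
def Cq (a : ℕ) : k := qint v ((n : ℤ) - a + 1) * qint v (a : ℤ)

lemma Cq_zero : Cq k v n 0 = 0 := by
  simp [Cq, qint_zero]

lemma Cq_top : Cq k v n (n + 1) = 0 := by
  have h : (n : ℤ) - ((n : ℕ) + 1 : ℕ) + 1 = 0 := by push_cast; ring
  simp [Cq, h, qint_zero]

/-- The action of `F` on `k^{n+1}`. -/
def fF : (Fin (n + 1) → k) →ₗ[k] (Fin (n + 1) → k) where
  toFun w b := if hb : (b : ℕ) = 0 then 0 else w ⟨(b : ℕ) - 1, by omega⟩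
  map_add' x y := by funext b; by_cases hb : b = 0 <;> simp [hb]
  map_smul' c x := by funext b; by_cases hb : b = 0 <;> simp [hb]

/-- The action of `E` on `k^{n+1}`. -/
def fE : (Fin (n + 1) → k) →ₗ[k] (Fin (n + 1) → k) where
  toFun w b := if hb : (b : ℕ) < n then Cq k v n ((b : ℕ) + 1) * w ⟨(b : ℕ) + 1, by omega⟩ else 0
  map_add' x y := by funext b; by_cases hb : (b : ℕ) < n <;> simp [hb, mul_add]
  map_smul' c x := by
    funext b; by_cases hb : (b : ℕ) < n <;> simp [hb, mul_left_comm]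

/-- The action of `1_i` on `k^{n+1}`. -/
def fU (i : ℤ) : (Fin (n + 1) → k) →ₗ[k] (Fin (n + 1) → k) where
  toFun w b := if (n : ℤ) - 2 * (b : ℕ) = i then w b else 0
  map_add' x y := by funext b; by_cases hb : (n : ℤ) - 2 * (b : ℕ) = i <;> simp [hb]
  map_smul' c x := by funext b; by_cases hb : (n : ℤ) - 2 * (b : ℕ) = i <;> simp [hb]

lemma fF_apply (w : Fin (n + 1) → k) (b : Fin (n + 1)) :
    fF k n w b = if hb : (b : ℕ) = 0 then 0 else w ⟨(b : ℕ) - 1, by omega⟩ := rfl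

lemma fE_apply (w : Fin (n + 1) → k) (b : Fin (n + 1)) :
    fE k v n w b
      = if hb : (b : ℕ) < n then Cq k v n ((b : ℕ) + 1) * w ⟨(b : ℕ) + 1, by omega⟩ else 0 := rfl

lemma fU_apply (i : ℤ) (w : Fin (n + 1) → k) (b : Fin (n + 1)) :
    fU k n i w b = if (n : ℤ) - 2 * (b : ℕ) = i then w b else 0 := rfl

lemma R_idem (i j : ℤ) :
    fU k n i * fU k n j = if i = j then fU k n i else 0 := by
  refine LinearMap.ext fun w => funext fun b => ?_
  rw [Module.End.mul_apply, fU_apply, fU_apply]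
  by_cases hij : i = j
  · subst hij
    rw [if_pos rfl, fU_apply]
    split_ifs <;> rfl
  · rw [if_neg hij, LinearMap.zero_apply, Pi.zero_apply]
    by_cases h1 : (n : ℤ) - 2 * (b : ℕ) = i
    · rw [if_pos h1, if_neg (by omega : ¬ ((n : ℤ) - 2 * (b : ℕ) = j))]
    · rw [if_neg h1]

lemma R_sum : ∑ i ∈ Xset n, fU k n i = 1 := by
  refine LinearMap.ext fun w => funext fun b => ?_
  have hb : (b : ℕ) ≤ n := Nat.lt_succ_iff.mp b.isLt
  rw [LinearMap.sum_apply, Finset.sum_apply]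
  have h : ∀ i ∈ Xset n, fU k n i w b
      = if (n : ℤ) - 2 * (b : ℕ) = i then w b else 0 := fun i _ => rfl
  rw [Finset.sum_congr rfl h, Finset.sum_ite_eq, if_pos (sub_two_mem_Xset n b hb)]
  rfl

lemma R_zero (i : ℤ) (hi : i ∉ Xset n) : fU k n i = 0 := by
  refine LinearMap.ext fun w => funext fun b => ?_
  have hb : (b : ℕ) ≤ n := Nat.lt_succ_iff.mp b.isLt
  rw [fU_apply, if_neg, LinearMap.zero_apply, Pi.zero_apply]
  intro h
  exact hi (h ▸ sub_two_mem_Xset n b hb)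

lemma fE_fF_apply (w : Fin (n + 1) → k) (b : Fin (n + 1)) :
    fE k v n (fF k n w) b = Cq k v n ((b : ℕ) + 1) * w b := by
  rw [fE_apply]
  by_cases hb : (b : ℕ) < n
  · rw [dif_pos hb, fF_apply, dif_neg (by simp)]
    congr 1
  · rw [dif_neg hb]
    have hbn : (b : ℕ) = n := by omega
    rw [hbn, Cq_top, zero_mul]

lemma fF_fE_apply (w : Fin (n + 1) → k) (b : Fin (n + 1)) :
    fF k n (fE k v n w) b = Cq k v n (b : ℕ) * w b := by
  rw [fF_apply]
  by_cases hb : (b : ℕ) = 0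
  · rw [dif_pos hb, hb, Cq_zero, zero_mul]
  · rw [dif_neg hb, fE_apply, dif_pos (by simp; omega)]
    congr 1
    · congr 1
      simp
      omega
    · exact congrArg w (Fin.ext (by simp; omega))

include hv in
lemma R_comm :
    fE k v n * fF k n - fF k n * fE k v n = ∑ i ∈ Xset n, qint v i • fU k n i := by
  refine LinearMap.ext fun w => funext fun b => ?_
  have hb : (b : ℕ) ≤ n := Nat.lt_succ_iff.mp b.isLt
  rw [LinearMap.sub_apply, Pi.sub_apply, Module.End.mul_apply, Module.End.mul_apply,
    fE_fF_apply, fF_fE_apply, LinearMap.sum_apply, Finset.sum_apply]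
  have h1 : ∀ i ∈ Xset n, (qint v i • fU k n i) w b
      = if (n : ℤ) - 2 * (b : ℕ) = i then qint v i * w b else 0 := by
    intro i _
    rw [LinearMap.smul_apply, Pi.smul_apply, fU_apply, smul_eq_mul, mul_ite, mul_zero]
  rw [Finset.sum_congr rfl h1, Finset.sum_ite_eq, if_pos (sub_two_mem_Xset n b hb)]
  have hcq : Cq k v n (b : ℕ) + qint v ((n : ℤ) - 2 * (b : ℕ)) = Cq k v n ((b : ℕ) + 1) :=
    Cstep k v hv n (b : ℕ) hb
  linear_combination (- w b) * hcq

lemma R_Eu (i : ℤ) : fE k v n * fU k n i = fU k n (i + 2) * fE k v n := by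
  refine LinearMap.ext fun w => funext fun b => ?_
  rw [Module.End.mul_apply, Module.End.mul_apply, fU_apply, fE_apply, fE_apply]
  by_cases hb : (b : ℕ) < n
  · rw [dif_pos hb, dif_pos hb, fU_apply, mul_ite, mul_zero]
    refine if_congr ?_ rfl rfl
    simp only [Fin.val_mk]
    omega
  · rw [dif_neg hb, dif_neg hb, ite_self]

lemma R_Fu (i : ℤ) : fF k n * fU k n i = fU k n (i - 2) * fF k n := by
  refine LinearMap.ext fun w => funext fun b => ?_
  rw [Module.End.mul_apply, Module.End.mul_apply, fU_apply, fF_apply, fF_apply]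
  by_cases hb : (b : ℕ) = 0
  · rw [dif_pos hb, dif_pos hb, ite_self]
  · rw [dif_neg hb, dif_neg hb, fU_apply]
    refine if_congr ?_ rfl rfl
    simp only [Fin.val_mk]
    omega

lemma R_uE (i : ℤ) : fU k n i * fE k v n = fE k v n * fU k n (i - 2) := by
  refine LinearMap.ext fun w => funext fun b => ?_
  rw [Module.End.mul_apply, Module.End.mul_apply, fU_apply, fE_apply, fE_apply]
  by_cases hb : (b : ℕ) < n
  · rw [dif_pos hb, dif_pos hb, fU_apply, mul_ite, mul_zero]
    refine if_congr ?_ rfl rfl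
    simp only [Fin.val_mk]
    omega
  · rw [dif_neg hb, dif_neg hb, ite_self]

lemma R_uF (i : ℤ) : fU k n i * fF k n = fF k n * fU k n (i + 2) := by
  refine LinearMap.ext fun w => funext fun b => ?_
  rw [Module.End.mul_apply, Module.End.mul_apply, fU_apply, fF_apply, fF_apply]
  by_cases hb : (b : ℕ) = 0
  · rw [dif_pos hb, dif_pos hb, ite_self]
  · rw [dif_neg hb, dif_neg hb, fU_apply]
    refine if_congr ?_ rfl rfl
    simp only [Fin.val_mk]
    omega

end PartC

section PartD
variable (v : k) (hv : v ≠ 0) (n : ℕ)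

/-- The images of the generators in `End(k^{n+1})`. -/
def gen : SchurGen → Module.End k (Fin (n + 1) → k)
  | SchurGen.E => fE k v n
  | SchurGen.F => fF k n
  | SchurGen.unit i => fU k n i

include hv in
lemma rep_rel : ∀ ⦃x y⦄, SchurRel k v n x y →
    FreeAlgebra.lift k (gen k v n) x = FreeAlgebra.lift k (gen k v n) y := by
  intro x y h
  induction h with
  | idem i hi j hj =>
    rw [map_mul, apply_ite (FreeAlgebra.lift k (gen k v n)), map_zero]
    simp only [FreeAlgebra.lift_ι_apply]
    exact R_idem k n i j
  | sum_one =>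
    rw [map_sum, map_one]
    simp only [FreeAlgebra.lift_ι_apply]
    exact R_sum k n
  | unit_zero i hi =>
    rw [map_zero]
    simp only [FreeAlgebra.lift_ι_apply]
    exact R_zero k n i hi
  | comm =>
    rw [map_sub, map_mul, map_mul, map_sum]
    simp only [map_smul, FreeAlgebra.lift_ι_apply]
    exact R_comm k v hv n
  | Eu i =>
    rw [map_mul, map_mul]
    simp only [FreeAlgebra.lift_ι_apply]
    exact R_Eu k v n i
  | Fu i =>
    rw [map_mul, map_mul]
    simp only [FreeAlgebra.lift_ι_apply]
    exact R_Fu k n i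
  | uE i =>
    rw [map_mul, map_mul]
    simp only [FreeAlgebra.lift_ι_apply]
    exact R_uE k v n i
  | uF i =>
    rw [map_mul, map_mul]
    simp only [FreeAlgebra.lift_ι_apply]
    exact R_uF k n i

/-- The representation of `S(n)` on `k^{n+1}`. -/
def rep : SchurAlg k v n →ₐ[k] Module.End k (Fin (n + 1) → k) :=
  RingQuot.liftAlgHom k ⟨FreeAlgebra.lift k (gen k v n), rep_rel k v hv n⟩

lemma rep_SE : rep k v hv n (SE k v n) = fE k v n := by
  rw [SE, rep, RingQuot.liftAlgHom_mkAlgHom_apply, FreeAlgebra.lift_ι_apply]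
  rfl

lemma rep_SF : rep k v hv n (SF k v n) = fF k n := by
  rw [SF, rep, RingQuot.liftAlgHom_mkAlgHom_apply, FreeAlgebra.lift_ι_apply]
  rfl

lemma rep_Sunit (i : ℤ) : rep k v hv n (Sunit k v n i) = fU k n i := by
  rw [Sunit, rep, RingQuot.liftAlgHom_mkAlgHom_apply, FreeAlgebra.lift_ι_apply]
  rfl

/-- Standard basis vectors (indexed by `ℕ`; zero when out of range). -/
def ea (a : ℕ) : Fin (n + 1) → k := fun b => if (b : ℕ) = a then 1 else 0

lemma ea_eq_single (a : Fin (n + 1)) : ea k n (a : ℕ) = Pi.single a 1 := by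
  funext b
  rw [ea, Pi.single_apply]
  refine if_congr ?_ rfl rfl
  exact ⟨fun h => Fin.ext h, fun h => congrArg Fin.val h⟩

lemma fF_ea (a : ℕ) : fF k n (ea k n a) = ea k n (a + 1) := by
  funext b
  rw [fF_apply]
  by_cases hb : (b : ℕ) = 0
  · rw [dif_pos hb, ea]
    rw [if_neg (by omega)]
  · rw [dif_neg hb]
    simp only [ea, Fin.val_mk]
    refine if_congr ?_ rfl rfl
    omega

lemma fU_n_ea0 : fU k n (n : ℤ) (ea k n 0) = ea k n 0 := by
  funext b
  rw [fU_apply, ea]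
  by_cases hb : (b : ℕ) = 0
  · rw [if_pos (by omega), if_pos hb]
  · rw [if_neg hb, ite_self]

lemma rep_xv (a : ℕ) : rep k v hv n (xv k v n a) (ea k n 0) = ea k n a := by
  induction a with
  | zero =>
    have h0 : xv k v n 0 = Sunit k v n (n : ℤ) := by rw [xv, pow_zero, one_mul]
    rw [h0, rep_Sunit, fU_n_ea0]
  | succ a ih =>
    rw [← SF_xv, map_mul, Module.End.mul_apply, ih, rep_SF, fF_ea]

/-- Evaluation at `e₀` as a `k`-linear map. -/
def evL : SchurAlg k v n →ₗ[k] (Fin (n + 1) → k) where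
  toFun x := rep k v hv n x (ea k n 0)
  map_add' x y := by rw [map_add]; rfl
  map_smul' c x := by rw [map_smul]; rfl

lemma evL_apply (x : SchurAlg k v n) : evL k v hv n x = rep k v hv n x (ea k n 0) := rfl

lemma li_ea : LinearIndependent k (fun a : Fin (n + 1) => ea k n (a : ℕ)) := by
  have h : (fun a : Fin (n + 1) => ea k n (a : ℕ))
      = fun a : Fin (n + 1) => (Pi.basisFun k (Fin (n + 1))) a := by
    funext a
    rw [ea_eq_single, Pi.basisFun_apply]
  rw [h]
  exact (Pi.basisFun k (Fin (n + 1))).linearIndependent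

include hv in
lemma li_xv : LinearIndependent k (fun a : Fin (n + 1) => xv k v n (a : ℕ)) := by
  apply LinearIndependent.of_comp (evL k v hv n)
  have h : (evL k v hv n ∘ fun a : Fin (n + 1) => xv k v n (a : ℕ))
      = fun a : Fin (n + 1) => ea k n (a : ℕ) := by
    funext a
    rw [Function.comp_apply, evL_apply, rep_xv]
  rw [h]
  exact li_ea k n

/-- The `k`-span of the `x_a`. -/
def Wspan : Submodule k (SchurAlg k v n) :=
  Submodule.span k (Set.range (fun a : Fin (n + 1) => xv k v n (a : ℕ)))

lemma xv_mem_Wspan (a : ℕ) (ha : a ≤ n) : xv k v n a ∈ Wspan k v n := by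
  refine Submodule.subset_span ⟨⟨a, by omega⟩, rfl⟩

include hv in
lemma mul_mem_Wspan (s : SchurAlg k v n) :
    ∀ x ∈ Wspan k v n, s * x ∈ Wspan k v n := by
  have hgen : ∀ t : SchurAlg k v n,
      (∀ a : ℕ, a ≤ n → t * xv k v n a ∈ Wspan k v n) →
      ∀ x ∈ Wspan k v n, t * x ∈ Wspan k v n := by
    intro t ht x hx
    induction hx using Submodule.span_induction with
    | mem y hy =>
      obtain ⟨a, rfl⟩ := hy
      exact ht a (by omega)
    | zero => rw [mul_zero]; exact zero_mem _
    | add y z _ _ hy hz => rw [mul_add]; exact add_mem hy hz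
    | smul c y _ hy => rw [mul_smul_comm]; exact Submodule.smul_mem _ c hy
  obtain ⟨p, rfl⟩ := RingQuot.mkAlgHom_surjective k (SchurRel k v n) s
  induction p using FreeAlgebra.induction with
  | grade0 r =>
    intro x hx
    rw [AlgHom.commutes, ← Algebra.smul_def]
    exact Submodule.smul_mem _ r hx
  | grade1 g =>
    cases g with
    | E =>
      refine hgen _ (fun a ha => ?_)
      have hE : RingQuot.mkAlgHom k (SchurRel k v n) (FreeAlgebra.ι k SchurGen.E)
          = SE k v n := rfl
      rw [hE, SE_xv k v hv n a ha]
      exact Submodule.smul_mem _ _ (xv_mem_Wspan k v n _ (by omega))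
    | F =>
      refine hgen _ (fun a ha => ?_)
      have hF : RingQuot.mkAlgHom k (SchurRel k v n) (FreeAlgebra.ι k SchurGen.F)
          = SF k v n := rfl
      rw [hF, SF_xv]
      rcases Nat.lt_or_ge a n with h | h
      · exact xv_mem_Wspan k v n _ (by omega)
      · have : a = n := by omega
        rw [this, xv_succ_n]
        exact zero_mem _
    | unit i =>
      refine hgen _ (fun a ha => ?_)
      have hU : RingQuot.mkAlgHom k (SchurRel k v n) (FreeAlgebra.ι k (SchurGen.unit i))
          = Sunit k v n i := rfl
      rw [hU, Sunit_xv]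
      split_ifs
      · exact xv_mem_Wspan k v n _ ha
      · exact zero_mem _
  | mul p q hp hq =>
    intro x hx
    rw [map_mul, mul_assoc]
    exact hp _ (hq x hx)
  | add p q hp hq =>
    intro x hx
    rw [map_add, add_mul]
    exact add_mem (hp x hx) (hq x hx)

include hv in
lemma span_eq :
    (Ideal.span {Sunit k v n (n : ℤ)}).restrictScalars k = Wspan k v n := by
  apply le_antisymm
  · intro x hx
    rw [Submodule.restrictScalars_mem, Ideal.span, Submodule.mem_span_singleton] at hx
    obtain ⟨s, rfl⟩ := hx
    rw [smul_eq_mul]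
    have h0 : Sunit k v n (n : ℤ) ∈ Wspan k v n := by
      have : xv k v n 0 = Sunit k v n (n : ℤ) := by rw [xv, pow_zero, one_mul]
      exact this ▸ xv_mem_Wspan k v n 0 (Nat.zero_le n)
    exact mul_mem_Wspan k v hv n s _ h0
  · rw [Wspan, Submodule.span_le]
    rintro y ⟨a, rfl⟩
    rw [SetLike.mem_coe, Submodule.restrictScalars_mem, Ideal.span,
      Submodule.mem_span_singleton]
    exact ⟨SF k v n ^ (a : ℕ), by rw [smul_eq_mul]; rfl⟩

end PartD

section PartE
variable (v : k) (hv : v ≠ 0) (n : ℕ)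

/-- The basis family of `V(n)`. -/
def bfam (hv : v ≠ 0) (a : Fin (n + 1)) :
    (Ideal.span {Sunit k v n (n : ℤ)}).restrictScalars k :=
  ⟨xv k v n (a : ℕ), by
    rw [span_eq k v hv n]
    exact xv_mem_Wspan k v n _ (by omega)⟩

include hv in
lemma li_bfam : LinearIndependent k (bfam k v n hv) := by
  apply LinearIndependent.of_comp
    ((Ideal.span {Sunit k v n (n : ℤ)}).restrictScalars k).subtype
  exact li_xv k v hv n

include hv in
lemma span_bfam : ⊤ ≤ Submodule.span k (Set.range (bfam k v n hv)) := by
  set V := (Ideal.span {Sunit k v n (n : ℤ)}).restrictScalars k with hV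
  have hinj := Submodule.map_injective_of_injective (Submodule.injective_subtype V)
  have hmap : Submodule.map V.subtype (Submodule.span k (Set.range (bfam k v n hv)))
      = Submodule.map V.subtype ⊤ := by
    rw [Submodule.map_span, Submodule.map_top, Submodule.range_subtype]
    have himg : V.subtype '' Set.range (bfam k v n hv)
        = Set.range (fun a : Fin (n + 1) => xv k v n (a : ℕ)) := by
      rw [← Set.range_comp]
      rfl
    rw [himg]
    exact (span_eq k v hv n).symm
  exact le_of_eq (hinj hmap).symm

/-- The basis of `V(n)`. -/
def bV : Module.Basis (Fin (n + 1)) k ((Ideal.span {Sunit k v n (n : ℤ)}).restrictScalars k) :=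
  Module.Basis.mk (li_bfam k v hv n) (span_bfam k v hv n)

include hv in
lemma bV_apply (a : Fin (n + 1)) :
    ((bV k v hv n a : (Ideal.span {Sunit k v n (n : ℤ)}).restrictScalars k) : SchurAlg k v n)
      = SF k v n ^ (a : ℕ) * Sunit k v n (n : ℤ) := by
  rw [bV, Module.Basis.mk_apply]
  rfl

end PartE

section PartF
variable (v : k) (hv : v ≠ 0) (n : ℕ)

lemma qintN_ne_zero (hfact : qfact v n ≠ 0) (j : ℕ) (h1 : 1 ≤ j) (h2 : j ≤ n) :
    qintN v j ≠ 0 := by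
  have h := Finset.prod_ne_zero_iff.mp hfact (j - 1) (Finset.mem_range.mpr (by omega))
  rwa [show j - 1 + 1 = j by omega] at h

lemma Cq_ne_zero (hfact : qfact v n ≠ 0) (a : ℕ) (h1 : 1 ≤ a) (h2 : a ≤ n) :
    Cq k v n a ≠ 0 := by
  rw [Cq, show (n : ℤ) - a + 1 = ((n - a + 1 : ℕ) : ℤ) by omega, qint_natCast, qint_natCast]
  exact mul_ne_zero (qintN_ne_zero k v n hfact (n - a + 1) (by omega) (by omega))
    (qintN_ne_zero k v n hfact a h1 h2)

lemma ea_zero_ne_zero : ea k n 0 ≠ 0 := by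
  intro h
  have h0 := congrFun h 0
  rw [ea] at h0
  simp at h0

include hv in
lemma simple_final (hfact : qfact v n ≠ 0) :
    IsSimpleModule (SchurAlg k v n) (Ideal.span {Sunit k v n (n : ℤ)}) := by
  letI : Module (SchurAlg k v n) (Fin (n + 1) → k) :=
    Module.compHom _ (rep k v hv n).toRingHom
  have hsmul : ∀ (s : SchurAlg k v n) (w : Fin (n + 1) → k), s • w = rep k v hv n s w :=
    fun s w => rfl
  have halg : ∀ (c : k) (w : Fin (n + 1) → k),
      (algebraMap k (SchurAlg k v n) c) • w = c • w := by
    intro c w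
    rw [hsmul, AlgHom.commutes, Module.algebraMap_end_apply]
  -- step: sweep down to `e₀`
  have hstep : ∀ N : Submodule (SchurAlg k v n) (Fin (n + 1) → k), ∀ m : ℕ,
      ∀ w, w ∈ N → w ≠ 0 → (∀ b : Fin (n + 1), m < (b : ℕ) → w b = 0) →
      ea k n 0 ∈ N := by
    intro N m
    induction m with
    | zero =>
      intro w hw hne hsupp
      have hw0 : w 0 ≠ 0 := by
        intro h0
        apply hne
        funext b
        rw [Pi.zero_apply]
        by_cases hb : (b : ℕ) = 0
        · have hb0 : b = 0 := Fin.ext hb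
          rw [hb0, h0]
        · exact hsupp b (by omega)
      have heq : ea k n 0 = (algebraMap k (SchurAlg k v n) (w 0)⁻¹) • w := by
        rw [halg]
        funext b
        rw [Pi.smul_apply, smul_eq_mul, ea]
        by_cases hb : (b : ℕ) = 0
        · have hb0 : b = 0 := Fin.ext hb
          rw [if_pos hb, hb0]
          field_simp
        · rw [if_neg hb, hsupp b (by omega), mul_zero]
      rw [heq]
      exact N.smul_mem _ hw
    | succ m ih =>
      intro w hw hne hsupp
      by_cases hmn : m + 1 ≤ n
      · by_cases hwm : w ⟨m + 1, by omega⟩ = 0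
        · apply ih w hw hne
          intro b hb
          by_cases hb1 : (b : ℕ) = m + 1
          · have : b = ⟨m + 1, by omega⟩ := Fin.ext hb1
            rw [this]
            exact hwm
          · exact hsupp b (by omega)
        · have hu : SE k v n • w = fE k v n w := by rw [hsmul, rep_SE]
          apply ih (SE k v n • w) (N.smul_mem _ hw)
          · intro h0
            apply hwm
            have hc := congrFun h0 ⟨m, by omega⟩
            rw [hu, fE_apply, dif_pos (show ((⟨m, by omega⟩ : Fin (n + 1)) : ℕ) < n by
              simp only [Fin.val_mk]; omega), Pi.zero_apply] at hc
            have hCne := Cq_ne_zero k v n hfact (m + 1) (by omega) hmn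
            have := (mul_eq_zero.mp hc).resolve_left (by
              simp only [Fin.val_mk]
              exact hCne)
            convert this using 2
          · intro b hb
            rw [hu, fE_apply]
            by_cases hbn : (b : ℕ) < n
            · rw [dif_pos hbn, hsupp ⟨(b : ℕ) + 1, by omega⟩ (by
                simp only [Fin.val_mk]; omega), mul_zero]
            · rw [dif_neg hbn]
      · apply ih w hw hne
        intro b hb
        have hbn : (b : ℕ) ≤ n := Nat.lt_succ_iff.mp b.isLt
        exact absurd hb (by omega)
  -- the module `k^{n+1}` is simple
  have hNT : Nontrivial (Submodule (SchurAlg k v n) (Fin (n + 1) → k)) := by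
    refine ⟨⊥, ⊤, fun h => ?_⟩
    have : ea k n 0 ∈ (⊥ : Submodule (SchurAlg k v n) (Fin (n + 1) → k)) := by
      rw [h]; trivial
    exact ea_zero_ne_zero k n (Submodule.mem_bot _ |>.mp this)
  have hsimple : IsSimpleModule (SchurAlg k v n) (Fin (n + 1) → k) := by
    refine (isSimpleModule_iff ..).mpr ⟨fun N => or_iff_not_imp_left.mpr (fun hN => ?_)⟩
    obtain ⟨w, hw, hne⟩ := (Submodule.ne_bot_iff N).mp hN
    have h0 : ea k n 0 ∈ N := hstep N n w hw hne (fun b hb =>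
      absurd hb (by have := Nat.lt_succ_iff.mp b.isLt; omega))
    rw [eq_top_iff]
    intro w _
    have hpow : ∀ a : ℕ, (SF k v n ^ a) • ea k n 0 = ea k n a := by
      intro a
      induction a with
      | zero => rw [pow_zero, one_smul]
      | succ a ih => rw [pow_succ', mul_smul, ih, hsmul, rep_SF, fF_ea]
    have hmem : ∀ a : ℕ, ea k n a ∈ N := fun a => (hpow a) ▸ N.smul_mem _ h0
    have hsingle : ∀ a : Fin (n + 1),
        (algebraMap k (SchurAlg k v n) (w a)) • ea k n (a : ℕ) = Pi.single a (w a) := by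
      intro a
      rw [halg, ea_eq_single]
      funext b
      rw [Pi.smul_apply, Pi.single_apply, Pi.single_apply, smul_eq_mul, mul_ite,
        mul_one, mul_zero]
    have hdecomp : w = ∑ a : Fin (n + 1),
        (algebraMap k (SchurAlg k v n) (w a)) • ea k n (a : ℕ) := by
      rw [Finset.sum_congr rfl (fun a _ => hsingle a), Finset.univ_sum_single]
    rw [hdecomp]
    exact Submodule.sum_mem _ (fun a _ => N.smul_mem _ (hmem a))
  -- transfer along the evaluation equivalence
  let f : (Ideal.span {Sunit k v n (n : ℤ)}) →ₗ[SchurAlg k v n] (Fin (n + 1) → k) :=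
    { toFun := fun x => rep k v hv n (x : SchurAlg k v n) (ea k n 0)
      map_add' := fun x y => by
        rw [Submodule.coe_add, map_add]
        rfl
      map_smul' := fun s x => by
        rw [RingHom.id_apply, hsmul, Submodule.coe_smul, smul_eq_mul, map_mul]
        rfl }
  have hbij : Function.Bijective f := by
    let g : ((Ideal.span {Sunit k v n (n : ℤ)}).restrictScalars k) →ₗ[k] (Fin (n + 1) → k) :=
      (evL k v hv n).comp ((Ideal.span {Sunit k v n (n : ℤ)}).restrictScalars k).subtype
    have hg : g = ((bV k v hv n).equiv (Pi.basisFun k (Fin (n + 1)))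
        (Equiv.refl _) : _ →ₗ[k] _) := by
      apply (bV k v hv n).ext
      intro a
      rw [show ((bV k v hv n).equiv (Pi.basisFun k (Fin (n + 1))) (Equiv.refl _) :
          _ →ₗ[k] _) ((bV k v hv n) a) = (Pi.basisFun k (Fin (n + 1))) a by
        simp [Module.Basis.equiv_apply], Pi.basisFun_apply, ← ea_eq_single]
      show evL k v hv n ((bV k v hv n a : SchurAlg k v n)) = ea k n (a : ℕ)
      rw [bV, Module.Basis.mk_apply]
      show evL k v hv n (xv k v n (a : ℕ)) = ea k n (a : ℕ)
      rw [evL_apply, rep_xv]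
    have hgbij : Function.Bijective g := by
      rw [hg]
      exact LinearEquiv.bijective _
    exact hgbij
  exact IsSimpleModule.congr (LinearEquiv.ofBijective f hbij)

end PartF

/-- the left ideal `V(n) = S(n)1_n`: basis, dimension, action of the
generators, and simplicity when `[n]! ≠ 0`. -/
theorem stmt_1 (k : Type*) [Field k] (v : k) (hv : v ≠ 0) (n : ℕ) :
    (∃ b : Module.Basis (Fin (n + 1)) k
        ((Ideal.span {Sunit k v n (n : ℤ)}).restrictScalars k),
      ∀ a : Fin (n + 1),
        (b a : SchurAlg k v n) = SF k v n ^ (a : ℕ) * Sunit k v n (n : ℤ)) ∧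
    Module.finrank k ((Ideal.span {Sunit k v n (n : ℤ)}).restrictScalars k) = n + 1 ∧
    (∀ a : ℕ, a < n →
      SF k v n * (SF k v n ^ a * Sunit k v n (n : ℤ)) =
        SF k v n ^ (a + 1) * Sunit k v n (n : ℤ)) ∧
    SF k v n * (SF k v n ^ n * Sunit k v n (n : ℤ)) = 0 ∧
    (∀ a : ℕ, 0 < a → a ≤ n →
      SE k v n * (SF k v n ^ a * Sunit k v n (n : ℤ)) =
        (qint v ((n : ℤ) - (a : ℤ) + 1) * qint v (a : ℤ)) •
          (SF k v n ^ (a - 1) * Sunit k v n (n : ℤ))) ∧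
    SE k v n * (SF k v n ^ 0 * Sunit k v n (n : ℤ)) = 0 ∧
    (∀ i ∈ Xset n, ∀ a : ℕ, a ≤ n →
      Sunit k v n i * (SF k v n ^ a * Sunit k v n (n : ℤ)) =
        if i = (n : ℤ) - 2 * (a : ℤ) then SF k v n ^ a * Sunit k v n (n : ℤ) else 0) ∧
    (qfact v n ≠ 0 →
      IsSimpleModule (SchurAlg k v n) (Ideal.span {Sunit k v n (n : ℤ)})) := by
  refine ⟨⟨bV k v hv n, fun a => bV_apply k v hv n a⟩, ?_, ?_, ?_, ?_, ?_, ?_, ?_⟩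
  · rw [Module.finrank_eq_card_basis (bV k v hv n), Fintype.card_fin]
  · intro a ha
    rw [← mul_assoc, ← pow_succ']
  · have h := xv_succ_n k v n
    rw [xv, pow_succ', mul_assoc] at h
    exact h
  · intro a ha1 ha2
    exact SE_xv k v hv n a ha2
  · have h := SE_xv k v hv n 0 (Nat.zero_le n)
    simp only [Nat.cast_zero, qint_zero, mul_zero, zero_smul] at h
    exact h
  · intro i hi a ha
    exact Sunit_xv k v n i a
  · intro hfact
    exact simple_final k v hv n hfact
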